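/- Let G be an edge-minimal counterexample to 'every graph without isolated vertices and isolated edges satisfies γ_tg(G) ≤ 3n/4'. If u is a vertex of G adjacent to a leaf w and to another vertex v (v ≠ w), then the graph G − uv obtained by deleting the edge uv contains an isolated edge (a K_2 component). -/

import Mathlib

open scoped Classical

namespace GameTD

/-- A move `v` is legal w.r.t. selected set `S` in the total domination game:
`v` totally dominates some vertex not yet totally dominated. -/
def Legal {V : Type*} (G : SimpleGraph V) (S : Finset V) (v : V) : Prop :=
  ∃ w, G.Adj v w ∧ ∀ u ∈ S, ¬ G.Adj u w

theorem Legal.not_mem {V : Type*} {G : SimpleGraph V} {S : Finset V} {v : V}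
    (h : Legal G S v) : v ∉ S := by
  rcases h with ⟨w, hadj, hw⟩
  intro hv
  exact hw v hv hadj

/-- The value of the total domination game from position `S`, with `b = true`
meaning Dominator (the minimizer) to move. The game ends when no legal move exists. -/
noncomputable def val {V : Type*} [Fintype V] (G : SimpleGraph V) (b : Bool) (S : Finset V) : ℕ :=
  let L := Finset.univ.filter (fun v => Legal G S v)
  if h : L.Nonempty then
    have hL : L.attach.Nonempty := h.attach
    if b then
      1 + L.attach.inf' hL (fun v => val G false (insert v.1 S))
    else
      1 + L.attach.sup' hL (fun v => val G true (insert v.1 S))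
  else 0
termination_by (Finset.univ \ S).card
decreasing_by
  all_goals {
    have hv : Legal G S v.1 := by
      have := v.2
      try simp only [Finset.mem_filter] at this
      exact (Finset.mem_filter.mp v.2).2
    have hvS : v.1 ∉ S := hv.not_mem
    apply Finset.card_lt_card
    constructor
    · intro x hx
      simp only [Finset.mem_sdiff] at hx ⊢
      exact ⟨hx.1, fun hmem => hx.2 (Finset.mem_insert_of_mem hmem)⟩
    · intro hsub
      have : v.1 ∈ Finset.univ \ S := by
        simp [hvS]
      have := hsub this
      simp at this
  }

/-- The game total domination number: Dominator starts from the empty position. -/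
noncomputable def gammaTG {V : Type*} [Fintype V] (G : SimpleGraph V) : ℕ :=
  val G true ∅

section
variable {V : Type*} [Fintype V] (G : SimpleGraph V)

lemma val_eq_zero {S : Finset V} (h : ∀ m, ¬ Legal G S m) (b : Bool) : val G b S = 0 := by
  rw [val]
  have : ¬ (Finset.univ.filter (fun v => Legal G S v)).Nonempty := by
    simp only [Finset.filter_nonempty_iff]
    rintro ⟨x, -, hx⟩; exact h x hx
  simp [this]

lemma val_true_le {S : Finset V} {m : V} (hm : Legal G S m) :
    val G true S ≤ 1 + val G false (insert m S) := by
  rw [val]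
  have hne : (Finset.univ.filter (fun v => Legal G S v)).Nonempty :=
    ⟨m, by simp [hm]⟩
  simp only [hne, dif_pos, if_pos]
  have hmem : m ∈ Finset.univ.filter (fun v => Legal G S v) := by simp [hm]
  exact Nat.add_le_add_left (Finset.inf'_le (fun v => val G false (insert v.1 S)) (Finset.mem_attach _ ⟨m, hmem⟩)) 1

lemma val_false_ge {S : Finset V} {m : V} (hm : Legal G S m) :
    1 + val G true (insert m S) ≤ val G false S := by
  conv_rhs => rw [val]
  have hne : (Finset.univ.filter (fun v => Legal G S v)).Nonempty :=
    ⟨m, by simp [hm]⟩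
  have hmem : m ∈ Finset.univ.filter (fun v => Legal G S v) := by simp [hm]
  simp only [hne, dif_pos, if_neg, Bool.false_eq_true, not_false_iff]
  exact Nat.add_le_add_left (Finset.le_sup' (fun v => val G true (insert v.1 S)) (Finset.mem_attach _ ⟨m, hmem⟩)) 1

lemma val_true_cases (S : Finset V) :
    (∀ m, ¬ Legal G S m) ∨
      ∃ m, Legal G S m ∧ val G true S = 1 + val G false (insert m S) := by
  by_cases h : (Finset.univ.filter (fun v => Legal G S v)).Nonempty
  · right
    obtain ⟨i, hi, heq⟩ := Finset.exists_mem_eq_inf' h.attach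
      (fun v => val G false (insert v.1 S))
    refine ⟨i.1, (Finset.mem_filter.mp i.2).2, ?_⟩
    rw [val]
    simp only [h, dif_pos, if_pos, heq]
  · left
    intro m hm
    exact h ⟨m, by simp [hm]⟩

lemma val_false_le {S : Finset V} {k : ℕ}
    (h : ∀ m, Legal G S m → 1 + val G true (insert m S) ≤ k) :
    val G false S ≤ k := by
  rw [val]
  by_cases hne : (Finset.univ.filter (fun v => Legal G S v)).Nonempty
  · simp only [hne, dif_pos, if_neg, Bool.false_eq_true, not_false_iff]
    obtain ⟨i, hi, heq⟩ := Finset.exists_mem_eq_sup' hne.attach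
      (fun v => val G true (insert v.1 S))
    rw [heq]
    exact h i.1 (Finset.mem_filter.mp i.2).2
  · simp [hne]

end

section
variable {V : Type*} [Fintype V] (G : SimpleGraph V)

/-- The set of vertices totally dominated by `S`. -/
noncomputable def Dom (S : Finset V) : Finset V :=
  Finset.univ.filter (fun x => ∃ s ∈ S, G.Adj s x)

lemma mem_Dom {S : Finset V} {x : V} : x ∈ Dom G S ↔ ∃ s ∈ S, G.Adj s x := by
  simp [Dom]

lemma legal_iff {S : Finset V} {m : V} :
    Legal G S m ↔ ∃ x, G.Adj m x ∧ x ∉ Dom G S := by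
  unfold Legal
  constructor
  · rintro ⟨x, hx, h⟩
    exact ⟨x, hx, fun hc => by rcases (mem_Dom G).mp hc with ⟨s, hs, hadj⟩; exact h s hs hadj⟩
  · rintro ⟨x, hx, h⟩
    exact ⟨x, hx, fun s hs hadj => h ((mem_Dom G).mpr ⟨s, hs, hadj⟩)⟩

lemma not_legal_iff {S : Finset V} {m : V} :
    ¬ Legal G S m ↔ ∀ x, G.Adj m x → x ∈ Dom G S := by
  rw [legal_iff]
  push_neg
  rfl

lemma mem_Dom_insert {S : Finset V} {m x : V} :
    x ∈ Dom G (insert m S) ↔ x ∈ Dom G S ∨ G.Adj m x := by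
  simp only [mem_Dom, Finset.mem_insert]
  constructor
  · rintro ⟨s, hs | hs, hadj⟩
    · exact Or.inr (hs ▸ hadj)
    · exact Or.inl ⟨s, hs, hadj⟩
  · rintro (⟨s, hs, hadj⟩ | hadj)
    · exact ⟨s, Or.inr hs, hadj⟩
    · exact ⟨m, Or.inl rfl, hadj⟩

lemma Dom_subset_insert {S : Finset V} {m : V} : Dom G S ⊆ Dom G (insert m S) :=
  fun x hx => (mem_Dom_insert G).mpr (Or.inl hx)

lemma measure_lt {S : Finset V} {m : V} (hm : Legal G S m) :
    (Finset.univ \ Dom G (insert m S)).card < (Finset.univ \ Dom G S).card := by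
  rcases (legal_iff G).mp hm with ⟨x, hadj, hx⟩
  apply Finset.card_lt_card
  constructor
  · intro y hy
    simp only [Finset.mem_sdiff] at hy ⊢
    exact ⟨hy.1, fun hc => hy.2 (Dom_subset_insert G hc)⟩
  · intro hsub
    have hx' : x ∈ Finset.univ \ Dom G S := by simp [hx]
    have := hsub hx'
    simp only [Finset.mem_sdiff] at this
    exact this.2 ((mem_Dom_insert G).mpr (Or.inr hadj))

lemma measure_le_of_subset {S T : Finset V} (h : Dom G S ⊆ Dom G T) :
    (Finset.univ \ Dom G T).card ≤ (Finset.univ \ Dom G S).card :=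
  Finset.card_le_card (fun x hx => by
    simp only [Finset.mem_sdiff] at hx ⊢
    exact ⟨hx.1, fun hc => hx.2 (h hc)⟩)

/-- Continuation principle + pass inequalities, proved simultaneously. -/
lemma triple (n : ℕ) :
    ∀ S : Finset V, (Finset.univ \ Dom G S).card ≤ n →
      ((val G true S ≤ 1 + val G false S) ∧
       (∀ T : Finset V, Dom G S ⊆ Dom G T → ∀ b, val G b T ≤ val G b S) ∧
       (val G false S ≤ 1 + val G true S)) := by
  induction n using Nat.strong_induction_on with
  | _ n IH =>
  have hA : ∀ S : Finset V, (Finset.univ \ Dom G S).card ≤ n →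
      val G true S ≤ 1 + val G false S := by
    intro S hS
    rcases val_true_cases G S with hnone | ⟨m, hm, -⟩
    · rw [val_eq_zero G hnone]; exact Nat.zero_le _
    · have hmeas := measure_lt G hm
      have hB := (IH _ (lt_of_lt_of_le hmeas hS) (insert m S) le_rfl).2.2
      calc val G true S ≤ 1 + val G false (insert m S) := val_true_le G hm
        _ ≤ 1 + (1 + val G true (insert m S)) := Nat.add_le_add_left hB 1
        _ ≤ 1 + val G false S := Nat.add_le_add_left (val_false_ge G hm) 1
  intro S hS
  have hCP : ∀ T : Finset V, Dom G S ⊆ Dom G T → ∀ b, val G b T ≤ val G b S := by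
    intro T hsub b
    by_cases hTleg : ∃ m, Legal G T m
    · obtain ⟨m₀, hm₀⟩ := hTleg
      have hm₀S : Legal G S m₀ := by
        rcases (legal_iff G).mp hm₀ with ⟨x, hadj, hx⟩
        exact (legal_iff G).mpr ⟨x, hadj, fun hc => hx (hsub hc)⟩
      cases b with
      | true =>
        rcases val_true_cases G S with hnone | ⟨m, hm, heq⟩
        · exact absurd hm₀S (hnone m₀)
        · rw [heq]
          by_cases hmT : Legal G T m
          · have h1 : Dom G (insert m S) ⊆ Dom G (insert m T) := by
              intro x hx
              rcases (mem_Dom_insert G).mp hx with hx | hx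
              · exact Dom_subset_insert G (hsub hx)
              · exact (mem_Dom_insert G).mpr (Or.inr hx)
            have hmeas := measure_lt G hm
            have := (IH _ (lt_of_lt_of_le hmeas hS) (insert m S) le_rfl).2.1
              (insert m T) h1 false
            exact le_trans (val_true_le G hmT) (Nat.add_le_add_left this 1)
          · -- m illegal in T : Dom (insert m S) ⊆ Dom T
            have h1 : Dom G (insert m S) ⊆ Dom G T := by
              intro x hx
              rcases (mem_Dom_insert G).mp hx with hx | hx
              · exact hsub hx
              · exact (not_legal_iff G).mp hmT x hx
            have hmeas := measure_lt G hm
            have hCP' := (IH _ (lt_of_lt_of_le hmeas hS) (insert m S) le_rfl).2.1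
              T h1 false
            have hAT : val G true T ≤ 1 + val G false T :=
              hA T (le_trans (measure_le_of_subset G hsub) hS)
            exact le_trans hAT (Nat.add_le_add_left hCP' 1)
      | false =>
        apply val_false_le
        intro m hm
        have hmS : Legal G S m := by
          rcases (legal_iff G).mp hm with ⟨x, hadj, hx⟩
          exact (legal_iff G).mpr ⟨x, hadj, fun hc => hx (hsub hc)⟩
        have h1 : Dom G (insert m S) ⊆ Dom G (insert m T) := by
          intro x hx
          rcases (mem_Dom_insert G).mp hx with hx | hx
          · exact Dom_subset_insert G (hsub hx)
          · exact (mem_Dom_insert G).mpr (Or.inr hx)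
        have hmeas := measure_lt G hmS
        have := (IH _ (lt_of_lt_of_le hmeas hS) (insert m S) le_rfl).2.1
          (insert m T) h1 true
        exact le_trans (Nat.add_le_add_left this 1) (val_false_ge G hmS)
    · push_neg at hTleg
      rw [val_eq_zero G hTleg]
      exact Nat.zero_le _
  refine ⟨hA S hS, hCP, ?_⟩
  apply val_false_le
  intro m hm
  exact Nat.add_le_add_left (hCP (insert m S) (Dom_subset_insert G) true) 1

lemma pass_ineq (S : Finset V) : val G true S ≤ 1 + val G false S :=
  (triple G _ S le_rfl).1

end


section KEdge
variable {V : Type*} [Fintype V] (G : SimpleGraph V) (u v w : V)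

lemma adj_del_iff {a b : V} :
    (G.deleteEdges {s(u,v)}).Adj a b ↔
      G.Adj a b ∧ ¬((a = u ∧ b = v) ∨ (a = v ∧ b = u)) := by
  rw [SimpleGraph.deleteEdges_adj]
  simp only [Set.mem_singleton_iff, Sym2.eq_iff]

variable (hw : ∀ x, G.Adj w x → x = u) (h_uw : G.Adj u w) (h_uv : G.Adj u v)
  (h_vw : v ≠ w)

include hw h_uw h_uv h_vw in
lemma mirror_conds (m : V) {S T : Finset V}
    (C1 : ∀ x, x ∈ Dom (G.deleteEdges {s(u,v)}) T → x ∈ Dom G S)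
    (C2 : ∀ x, x ∈ Dom G S → x ∈ Dom (G.deleteEdges {s(u,v)}) T ∨ x = u ∨ x = v)
    (H1 : w ∈ Dom (G.deleteEdges {s(u,v)}) T → v ∈ Dom G S)
    (H2 : v ∈ Dom G S → v ∈ Dom (G.deleteEdges {s(u,v)}) T ∨
      w ∈ Dom (G.deleteEdges {s(u,v)}) T) :
    (∀ x, x ∈ Dom (G.deleteEdges {s(u,v)}) (insert m T) → x ∈ Dom G (insert m S)) ∧
    (∀ x, x ∈ Dom G (insert m S) →
      x ∈ Dom (G.deleteEdges {s(u,v)}) (insert m T) ∨ x = u ∨ x = v) ∧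
    (w ∈ Dom (G.deleteEdges {s(u,v)}) (insert m T) → v ∈ Dom G (insert m S)) ∧
    (v ∈ Dom G (insert m S) → v ∈ Dom (G.deleteEdges {s(u,v)}) (insert m T) ∨
      w ∈ Dom (G.deleteEdges {s(u,v)}) (insert m T)) := by
  set G' := G.deleteEdges {s(u,v)} with hG'
  refine ⟨?_, ?_, ?_, ?_⟩
  · intro x hx
    rcases (mem_Dom_insert G').mp hx with hx | hx
    · exact Dom_subset_insert G (C1 x hx)
    · exact (mem_Dom_insert G).mpr (Or.inr ((adj_del_iff G u v).mp hx).1)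
  · intro x hx
    rcases (mem_Dom_insert G).mp hx with hx | hx
    · rcases C2 x hx with h | h
      · exact Or.inl (Dom_subset_insert G' h)
      · exact Or.inr h
    · by_cases hx' : G'.Adj m x
      · exact Or.inl ((mem_Dom_insert G').mpr (Or.inr hx'))
      · have : (m = u ∧ x = v) ∨ (m = v ∧ x = u) := by
          by_contra hc
          exact hx' ((adj_del_iff G u v).mpr ⟨hx, hc⟩)
        rcases this with ⟨-, h⟩ | ⟨-, h⟩
        · exact Or.inr (Or.inr h)
        · exact Or.inr (Or.inl h)
  · intro hx
    rcases (mem_Dom_insert G').mp hx with hx | hx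
    · exact Dom_subset_insert G (H1 hx)
    · have hmu : m = u := hw m (((adj_del_iff G u v).mp hx).1.symm)
      exact (mem_Dom_insert G).mpr (Or.inr (hmu ▸ h_uv))
  · intro hx
    rcases (mem_Dom_insert G).mp hx with hx | hx
    · rcases H2 hx with h | h
      · exact Or.inl (Dom_subset_insert G' h)
      · exact Or.inr (Dom_subset_insert G' h)
    · by_cases hx' : G'.Adj m v
      · exact Or.inl ((mem_Dom_insert G').mpr (Or.inr hx'))
      · have : (m = u ∧ v = v) ∨ (m = v ∧ v = u) := by
          by_contra hc
          exact hx' ((adj_del_iff G u v).mpr ⟨hx, hc⟩)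
        have hmu : m = u := by
          rcases this with ⟨h, -⟩ | ⟨hm, h⟩
          · exact h
          · exact absurd (h ▸ hm ▸ hx) (G.irrefl)
        refine Or.inr ((mem_Dom_insert G').mpr (Or.inr ?_))
        refine (adj_del_iff G u v).mpr ⟨hmu ▸ h_uw, ?_⟩
        rintro (⟨-, h⟩ | ⟨h, -⟩)
        · exact h_vw h.symm
        · exact h_uv.ne (hmu.symm.trans h)

include hw h_uw h_uv h_vw in
lemma K_edge (h_ni : ∀ x : V, ∃ y, G.Adj x y) (n : ℕ) :
    ∀ (b : Bool) (S T : Finset V),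
      (Finset.univ \ Dom (G.deleteEdges {s(u,v)}) T).card ≤ n →
      (∀ x, x ∈ Dom (G.deleteEdges {s(u,v)}) T → x ∈ Dom G S) →
      (∀ x, x ∈ Dom G S → x ∈ Dom (G.deleteEdges {s(u,v)}) T ∨ x = u ∨ x = v) →
      (w ∈ Dom (G.deleteEdges {s(u,v)}) T → v ∈ Dom G S) →
      (v ∈ Dom G S → v ∈ Dom (G.deleteEdges {s(u,v)}) T ∨
        w ∈ Dom (G.deleteEdges {s(u,v)}) T) →
      val G b S ≤ val (G.deleteEdges {s(u,v)}) b T := by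
  set G' := G.deleteEdges {s(u,v)} with hG'
  have huv : u ≠ v := h_uv.ne
  have huw : u ≠ w := h_uw.ne
  have adj'_uw : G'.Adj u w := by
    refine (adj_del_iff G u v).mpr ⟨h_uw, ?_⟩
    rintro (⟨-, h⟩ | ⟨h, -⟩)
    · exact h_vw h.symm
    · exact huv h
  induction n using Nat.strong_induction_on with
  | _ n IH =>
  intro b S T hn C1 C2 H1 H2
  cases b with
  | true =>
    rcases val_true_cases G' T with hnone | ⟨m, hmleg, heq⟩
    · -- the G'-game is over; show the G-game is over as well
      have hall : ∀ x : V, x ∈ Dom G S := by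
        intro x
        by_cases hxv : x = v
        · subst hxv
          exact H1 ((not_legal_iff G').mp (hnone u) w adj'_uw)
        · by_cases hxu : x = u
          · subst hxu
            exact C1 x ((not_legal_iff G').mp (hnone w) x adj'_uw.symm)
          · obtain ⟨y, hy⟩ := h_ni x
            have : G'.Adj y x := by
              refine (adj_del_iff G u v).mpr ⟨hy.symm, ?_⟩
              rintro (⟨-, h⟩ | ⟨-, h⟩)
              · exact hxv h
              · exact hxu h
            exact C1 x ((not_legal_iff G').mp (hnone y) x this)
      have hnoneG : ∀ m, ¬ Legal G S m := by
        intro m hm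
        rcases (legal_iff G).mp hm with ⟨x, -, hx⟩
        exact hx (hall x)
      rw [val_eq_zero G hnoneG, val_eq_zero G' hnone]
    · rw [heq]
      by_cases hmS : Legal G S m
      · obtain ⟨c1, c2, c3, c4⟩ := mirror_conds G u v w hw h_uw h_uv h_vw m C1 C2 H1 H2
        have hrec := IH _ (lt_of_lt_of_le (measure_lt G' hmleg) hn) false
          (insert m S) (insert m T) le_rfl c1 c2 c3 c4
        exact le_trans (val_true_le G hmS) (Nat.add_le_add_left hrec 1)
      · -- m is illegal in G : everything it dominates is already dominated; pass
        have hmS' := (not_legal_iff G).mp hmS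
        have c1 : ∀ x, x ∈ Dom G' (insert m T) → x ∈ Dom G S := by
          intro x hx
          rcases (mem_Dom_insert G').mp hx with hx | hx
          · exact C1 x hx
          · exact hmS' x ((adj_del_iff G u v).mp hx).1
        have c2 : ∀ x, x ∈ Dom G S → x ∈ Dom G' (insert m T) ∨ x = u ∨ x = v := by
          intro x hx
          rcases C2 x hx with h | h
          · exact Or.inl (Dom_subset_insert G' h)
          · exact Or.inr h
        have c3 : w ∈ Dom G' (insert m T) → v ∈ Dom G S := by
          intro hx
          rcases (mem_Dom_insert G').mp hx with hx | hx
          · exact H1 hx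
          · have hmu : m = u := hw m (((adj_del_iff G u v).mp hx).1.symm)
            exact hmS' v (hmu ▸ h_uv)
        have c4 : v ∈ Dom G S → v ∈ Dom G' (insert m T) ∨ w ∈ Dom G' (insert m T) := by
          intro hx
          rcases H2 hx with h | h
          · exact Or.inl (Dom_subset_insert G' h)
          · exact Or.inr (Dom_subset_insert G' h)
        have hrec := IH _ (lt_of_lt_of_le (measure_lt G' hmleg) hn) false
          S (insert m T) le_rfl c1 c2 c3 c4
        exact le_trans (pass_ineq G S) (Nat.add_le_add_left hrec 1)
  | false =>
    apply val_false_le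
    intro m hmS
    by_cases hmT : Legal G' T m
    · obtain ⟨c1, c2, c3, c4⟩ := mirror_conds G u v w hw h_uw h_uv h_vw m C1 C2 H1 H2
      have hrec := IH _ (lt_of_lt_of_le (measure_lt G' hmT) hn) true
        (insert m S) (insert m T) le_rfl c1 c2 c3 c4
      exact le_trans (Nat.add_le_add_left hrec 1) (val_false_ge G' hmT)
    · rcases (legal_iff G).mp hmS with ⟨x₀, hadj, hx₀⟩
      have hx₀T : x₀ ∉ Dom G' T := fun h => hx₀ (C1 _ h)
      have hnadj : ¬ G'.Adj m x₀ := fun h => hx₀T ((not_legal_iff G').mp hmT _ h)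
      have hcase : (m = u ∧ x₀ = v) ∨ (m = v ∧ x₀ = u) := by
        by_contra hc
        exact hnadj ((adj_del_iff G u v).mpr ⟨hadj, hc⟩)
      rcases hcase with ⟨hmu, hx₀v⟩ | ⟨hmv, hx₀u⟩
      · exfalso
        have hwT : w ∈ Dom G' T :=
          (not_legal_iff G').mp hmT w (hmu ▸ adj'_uw)
        exact hx₀ (hx₀v ▸ H1 hwT)
      · rw [hmv]
        rw [hmv, hx₀u] at hadj
        rw [hx₀u] at hx₀T
        rw [hmv] at hmT
        have hwleg : Legal G' T w := (legal_iff G').mpr ⟨u, adj'_uw.symm, hx₀T⟩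
        have hmT' := (not_legal_iff G').mp hmT
        have c1 : ∀ x, x ∈ Dom G' (insert w T) → x ∈ Dom G (insert v S) := by
          intro x hx
          rcases (mem_Dom_insert G').mp hx with hx | hx
          · exact Dom_subset_insert G (C1 x hx)
          · have hxu : x = u := hw x ((adj_del_iff G u v).mp hx).1
            subst hxu
            exact (mem_Dom_insert G).mpr (Or.inr hadj)
        have c2 : ∀ x, x ∈ Dom G (insert v S) →
            x ∈ Dom G' (insert w T) ∨ x = u ∨ x = v := by
          intro x hx
          rcases (mem_Dom_insert G).mp hx with hx | hx
          · rcases C2 x hx with h | h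
            · exact Or.inl (Dom_subset_insert G' h)
            · exact Or.inr h
          · by_cases hx' : G'.Adj v x
            · exact Or.inl (Dom_subset_insert G' (hmT' x hx'))
            · have : (v = u ∧ x = v) ∨ (v = v ∧ x = u) := by
                by_contra hc
                exact hx' ((adj_del_iff G u v).mpr ⟨hx, hc⟩)
              rcases this with ⟨h, -⟩ | ⟨-, h⟩
              · exact absurd h hadj.ne
              · exact Or.inr (Or.inl h)
        have c3 : w ∈ Dom G' (insert w T) → v ∈ Dom G (insert v S) := by
          intro hx
          rcases (mem_Dom_insert G').mp hx with hx | hx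
          · exact Dom_subset_insert G (H1 hx)
          · exact ((G'.loopless.irrefl w) hx).elim
        have c4 : v ∈ Dom G (insert v S) →
            v ∈ Dom G' (insert w T) ∨ w ∈ Dom G' (insert w T) := by
          intro hx
          rcases (mem_Dom_insert G).mp hx with hx | hx
          · rcases H2 hx with h | h
            · exact Or.inl (Dom_subset_insert G' h)
            · exact Or.inr (Dom_subset_insert G' h)
          · exact ((G.loopless.irrefl v) hx).elim
        have hrec := IH _ (lt_of_lt_of_le (measure_lt G' hwleg) hn) true
          (insert v S) (insert w T) le_rfl c1 c2 c3 c4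
        exact le_trans (Nat.add_le_add_left hrec 1) (val_false_ge G' hwleg)

end KEdge

section KVertex
variable {V : Type*} [Fintype V] (G : SimpleGraph V) (u v w : V)

lemma K_vertex {W : Type*} [Fintype W] (H : SimpleGraph W) (ι : W → V)
    (hadjH : ∀ a b : W, H.Adj a b ↔ G.Adj (ι a) (ι b))
    (hsurj : ∀ x : V, x ≠ v → ∃ a : W, ι a = x)
    (hv_leaf : ∀ x, G.Adj v x → x = u) (hw_leaf : ∀ x, G.Adj w x → x = u)
    (h_uw : G.Adj u w) (h_uv : G.Adj u v) (h_vw : v ≠ w)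
    (h_ni : ∀ x : V, ∃ y, G.Adj x y)
    (wW : W) (hwW : ι wW = w) (n : ℕ) :
    ∀ (b : Bool) (S : Finset V) (T : Finset W),
      (Finset.univ \ Dom H T).card ≤ n →
      (∀ x : W, x ∈ Dom H T → ι x ∈ Dom G S) →
      (∀ x : W, ι x ∈ Dom G S → x ∈ Dom H T) →
      (wW ∈ Dom H T → v ∈ Dom G S) →
      val G b S ≤ val H b T := by
  have hune : u ≠ v := h_uv.ne
  have hwne : w ≠ v := fun h => h_vw h.symm
  obtain ⟨uW, huW⟩ := hsurj u hune
  induction n using Nat.strong_induction_on with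
  | _ n IH =>
  intro b S T hn C1 C2 H1
  cases b with
  | true =>
    rcases val_true_cases H T with hnone | ⟨m, hmleg, heq⟩
    · -- H-game over: all of V is dominated in the G-game
      have hall : ∀ x : V, x ∈ Dom G S := by
        intro x
        by_cases hxv : x = v
        · subst hxv
          refine H1 ((not_legal_iff H).mp (hnone uW) wW ?_)
          refine (hadjH _ _).mpr ?_
          rw [huW, hwW]; exact h_uw
        · obtain ⟨y, hy⟩ := h_ni x
          by_cases hyv : y = v
          · have hxu : x = u := hv_leaf x (hyv ▸ hy.symm)
            have : uW ∈ Dom H T := by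
              refine (not_legal_iff H).mp (hnone wW) uW ?_
              refine (hadjH _ _).mpr ?_
              rw [huW, hwW]; exact h_uw.symm
            have := C1 uW this
            rw [huW] at this
            rw [hxu]; exact this
          · obtain ⟨xW, hxW⟩ := hsurj x hxv
            obtain ⟨yW, hyW⟩ := hsurj y hyv
            have : xW ∈ Dom H T := by
              refine (not_legal_iff H).mp (hnone yW) xW ?_
              refine (hadjH _ _).mpr ?_
              rw [hxW, hyW]; exact hy.symm
            have := C1 xW this
            rw [hxW] at this
            exact this
      have hnoneG : ∀ m, ¬ Legal G S m := by
        intro m hm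
        rcases (legal_iff G).mp hm with ⟨x, -, hx⟩
        exact hx (hall x)
      rw [val_eq_zero G hnoneG, val_eq_zero H hnone]
    · rw [heq]
      have hmG : Legal G S (ι m) := by
        rcases (legal_iff H).mp hmleg with ⟨x, hadj, hx⟩
        exact (legal_iff G).mpr ⟨ι x, (hadjH _ _).mp hadj, fun hc => hx (C2 x hc)⟩
      have c1 : ∀ x : W, x ∈ Dom H (insert m T) → ι x ∈ Dom G (insert (ι m) S) := by
        intro x hx
        rcases (mem_Dom_insert H).mp hx with hx | hx
        · exact Dom_subset_insert G (C1 x hx)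
        · exact (mem_Dom_insert G).mpr (Or.inr ((hadjH _ _).mp hx))
      have c2 : ∀ x : W, ι x ∈ Dom G (insert (ι m) S) → x ∈ Dom H (insert m T) := by
        intro x hx
        rcases (mem_Dom_insert G).mp hx with hx | hx
        · exact Dom_subset_insert H (C2 x hx)
        · exact (mem_Dom_insert H).mpr (Or.inr ((hadjH _ _).mpr hx))
      have h1 : wW ∈ Dom H (insert m T) → v ∈ Dom G (insert (ι m) S) := by
        intro hx
        rcases (mem_Dom_insert H).mp hx with hx | hx
        · exact Dom_subset_insert G (H1 hx)
        · have hmu : ι m = u := by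
            refine hw_leaf (ι m) ?_
            have := (hadjH _ _).mp hx
            rw [hwW] at this
            exact this.symm
          exact (mem_Dom_insert G).mpr (Or.inr (hmu ▸ h_uv))
      have hrec := IH _ (lt_of_lt_of_le (measure_lt H hmleg) hn) false
        (insert (ι m) S) (insert m T) le_rfl c1 c2 h1
      exact le_trans (val_true_le G hmG) (Nat.add_le_add_left hrec 1)
  | false =>
    apply val_false_le
    intro m hmS
    by_cases hmv : m = v
    · -- Staller plays the twin leaf v; imagine the move wW instead
      rw [hmv]
      rw [hmv] at hmS
      obtain ⟨x₀, hadj, hx₀⟩ := (legal_iff G).mp hmS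
      have hx₀u : x₀ = u := hv_leaf x₀ hadj
      rw [hx₀u] at hx₀
      have hwleg : Legal H T wW := by
        refine (legal_iff H).mpr ⟨uW, ?_, fun hc => ?_⟩
        · refine (hadjH _ _).mpr ?_
          rw [huW, hwW]; exact h_uw.symm
        · have := C1 uW hc
          rw [huW] at this
          exact hx₀ this
      have c1 : ∀ x : W, x ∈ Dom H (insert wW T) → ι x ∈ Dom G (insert v S) := by
        intro x hx
        rcases (mem_Dom_insert H).mp hx with hx | hx
        · exact Dom_subset_insert G (C1 x hx)
        · have hxu : ι x = u := by
            refine hw_leaf (ι x) ?_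
            have := (hadjH _ _).mp hx
            rw [hwW] at this
            exact this
          refine (mem_Dom_insert G).mpr (Or.inr ?_)
          rw [hxu]; exact h_uv.symm
      have c2 : ∀ x : W, ι x ∈ Dom G (insert v S) → x ∈ Dom H (insert wW T) := by
        intro x hx
        rcases (mem_Dom_insert G).mp hx with hx | hx
        · exact Dom_subset_insert H (C2 x hx)
        · have hxu : ι x = u := hv_leaf _ hx
          refine (mem_Dom_insert H).mpr (Or.inr ?_)
          refine (hadjH _ _).mpr ?_
          rw [hwW, hxu]
          exact h_uw.symm
      have h1 : wW ∈ Dom H (insert wW T) → v ∈ Dom G (insert v S) := by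
        intro hx
        rcases (mem_Dom_insert H).mp hx with hx | hx
        · exact Dom_subset_insert G (H1 hx)
        · exact ((H.loopless.irrefl _) hx).elim
      have hrec := IH _ (lt_of_lt_of_le (measure_lt H hwleg) hn) true
        (insert v S) (insert wW T) le_rfl c1 c2 h1
      exact le_trans (Nat.add_le_add_left hrec 1) (val_false_ge H hwleg)
    · -- mirror the move
      obtain ⟨mW, hmW⟩ := hsurj m hmv
      have hmleg : Legal H T mW := by
        by_contra hno
        have hno' := (not_legal_iff H).mp hno
        obtain ⟨x₀, hadj, hx₀⟩ := (legal_iff G).mp hmS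
        by_cases hx₀v : x₀ = v
        · have hmu : m = u := hv_leaf m (hx₀v ▸ hadj.symm)
          have : wW ∈ Dom H T := by
            refine hno' wW ((hadjH _ _).mpr ?_)
            rw [hmW, hwW, hmu]; exact h_uw
          exact hx₀ (hx₀v ▸ (H1 this))
        · obtain ⟨x₀W, hx₀W⟩ := hsurj x₀ hx₀v
          have : x₀W ∈ Dom H T := by
            refine hno' x₀W ((hadjH _ _).mpr ?_)
            rw [hmW, hx₀W]; exact hadj
          have := C1 x₀W this
          rw [hx₀W] at this
          exact hx₀ this
      have c1 : ∀ x : W, x ∈ Dom H (insert mW T) → ι x ∈ Dom G (insert m S) := by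
        intro x hx
        rcases (mem_Dom_insert H).mp hx with hx | hx
        · exact Dom_subset_insert G (C1 x hx)
        · have := (hadjH _ _).mp hx
          rw [hmW] at this
          exact (mem_Dom_insert G).mpr (Or.inr this)
      have c2 : ∀ x : W, ι x ∈ Dom G (insert m S) → x ∈ Dom H (insert mW T) := by
        intro x hx
        rcases (mem_Dom_insert G).mp hx with hx | hx
        · exact Dom_subset_insert H (C2 x hx)
        · refine (mem_Dom_insert H).mpr (Or.inr ?_)
          refine (hadjH _ _).mpr ?_
          rw [hmW]; exact hx
      have h1 : wW ∈ Dom H (insert mW T) → v ∈ Dom G (insert m S) := by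
        intro hx
        rcases (mem_Dom_insert H).mp hx with hx | hx
        · exact Dom_subset_insert G (H1 hx)
        · have hmu : m = u := by
            refine hw_leaf m ?_
            have := (hadjH _ _).mp hx
            rw [hmW, hwW] at this
            exact this.symm
          refine (mem_Dom_insert G).mpr (Or.inr ?_)
          rw [hmu]; exact h_uv
      have hrec := IH _ (lt_of_lt_of_le (measure_lt H hmleg) hn) true
        (insert m S) (insert mW T) le_rfl c1 c2 h1
      exact le_trans (Nat.add_le_add_left hrec 1) (val_false_ge H hmleg)

end KVertex


end GameTD

/-- If `G` is an edge-minimal counterexample to the 3/4-bound, `u` is adjacent to a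
leaf `w` and to another vertex `v ≠ w`, then `G - uv` contains an isolated edge. -/
theorem isolated_edge_after_deletion {V : Type} [Fintype V] (G : SimpleGraph V)
    (h_no_isolated_vertex : ∀ v : V, ∃ w, G.Adj v w)
    (h_no_isolated_edge :
      ¬ ∃ u v : V, G.Adj u v ∧ (∀ w, G.Adj u w → w = v) ∧ (∀ w, G.Adj v w → w = u))
    (h_counterexample : ¬ (4 * GameTD.gammaTG G ≤ 3 * Fintype.card V))
    (h_minimal : ∀ (W : Type) [Fintype W] (H : SimpleGraph W),
      (∀ v : W, ∃ w, H.Adj v w) →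
      (¬ ∃ u v : W, H.Adj u v ∧ (∀ w, H.Adj u w → w = v) ∧ (∀ w, H.Adj v w → w = u)) →
      H.edgeFinset.card < G.edgeFinset.card →
      4 * GameTD.gammaTG H ≤ 3 * Fintype.card W)
    (u w v : V) (h_leaf : G.degree w = 1) (h_uw : G.Adj u w) (h_uv : G.Adj u v)
    (h_vw : v ≠ w) :
    ∃ a b : V, (G.deleteEdges {s(u, v)}).Adj a b ∧
      (∀ x, (G.deleteEdges {s(u, v)}).Adj a x → x = b) ∧
      (∀ x, (G.deleteEdges {s(u, v)}).Adj b x → x = a) := by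
  have huv : u ≠ v := h_uv.ne
  have huw : u ≠ w := h_uw.ne
  have hwv : w ≠ v := fun h => h_vw h.symm
  -- the unique neighbour of the leaf w is u
  have hw : ∀ x, G.Adj w x → x = u := by
    have h1 : (G.neighborFinset w).card = 1 := h_leaf
    obtain ⟨a, ha⟩ := Finset.card_eq_one.mp h1
    have hu : u ∈ G.neighborFinset w := (SimpleGraph.mem_neighborFinset G w u).mpr h_uw.symm
    rw [ha, Finset.mem_singleton] at hu
    intro x hx
    have hx' : x ∈ G.neighborFinset w := (SimpleGraph.mem_neighborFinset G w x).mpr hx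
    rw [ha, Finset.mem_singleton] at hx'
    rw [hx', hu]
  have hadj' : ∀ a b : V, (G.deleteEdges {s(u,v)}).Adj a b ↔
      G.Adj a b ∧ ¬((a = u ∧ b = v) ∨ (a = v ∧ b = u)) :=
    fun a b => GameTD.adj_del_iff G u v
  by_cases hu_only : ∀ x, G.Adj u x → x = w ∨ x = v
  · -- u has no third neighbour: u-w is an isolated edge of G - uv
    refine ⟨u, w, ?_, ?_, ?_⟩
    · exact (hadj' u w).mpr ⟨h_uw, by rintro (⟨-, h⟩ | ⟨h, -⟩); exacts [hwv h, huv h]⟩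
    · intro x hx
      obtain ⟨hadj, hne⟩ := (hadj' u x).mp hx
      rcases hu_only x hadj with h | h
      · exact h
      · exact absurd (Or.inl ⟨rfl, h⟩) hne
    · intro x hx
      exact hw x ((hadj' w x).mp hx).1
  · push_neg at hu_only
    obtain ⟨z, huz, hzw, hzv⟩ := hu_only
    by_contra hno_iso
    -- Dominator does at least as well in G as in G - uv
    have hempty : ∀ (G₀ : SimpleGraph V) (x : V), x ∉ GameTD.Dom G₀ (∅ : Finset V) := by
      intro G₀ x hx
      obtain ⟨s, hs, -⟩ := (GameTD.mem_Dom G₀).mp hx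
      exact absurd hs (Finset.notMem_empty s)
    have hKedge : GameTD.gammaTG G ≤ GameTD.gammaTG (G.deleteEdges {s(u,v)}) := by
      refine GameTD.K_edge G u v w hw h_uw h_uv h_vw h_no_isolated_vertex _ true ∅ ∅ le_rfl
        ?_ ?_ ?_ ?_
      · intro x hx; exact absurd hx (hempty _ x)
      · intro x hx; exact absurd hx (hempty _ x)
      · intro hx; exact absurd hx (hempty _ w)
      · intro hx; exact absurd hx (hempty _ v)
    by_cases hv' : ∃ y, G.Adj v y ∧ y ≠ u
    · -- Subcase A: v keeps a neighbour in G - uv; apply minimality to G - uv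
      obtain ⟨v', hvv', hv'u⟩ := hv'
      have h_ni' : ∀ x : V, ∃ y, (G.deleteEdges {s(u,v)}).Adj x y := by
        intro x
        by_cases hxu : x = u
        · refine ⟨w, (hadj' x w).mpr ⟨?_, ?_⟩⟩
          · rw [hxu]; exact h_uw
          · rintro (⟨-, h⟩ | ⟨h, -⟩)
            · exact hwv h
            · exact huv (hxu.symm.trans h)
        · by_cases hxv : x = v
          · refine ⟨v', (hadj' x v').mpr ⟨?_, ?_⟩⟩
            · rw [hxv]; exact hvv'
            · rintro (⟨h, -⟩ | ⟨-, h⟩)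
              · exact huv (h.symm.trans hxv)
              · exact hv'u h
          · obtain ⟨y, hy⟩ := h_no_isolated_vertex x
            refine ⟨y, (hadj' x y).mpr ⟨hy, ?_⟩⟩
            rintro (⟨h, -⟩ | ⟨h, -⟩)
            · exact hxu h
            · exact hxv h
      have h_lt : G.deleteEdges {s(u,v)} < G := by
        refine lt_of_le_of_ne (SimpleGraph.deleteEdges_le _) ?_
        intro heq
        have : (G.deleteEdges {s(u,v)}).Adj u v := by rw [heq]; exact h_uv
        exact ((hadj' u v).mp this).2 (Or.inl ⟨rfl, rfl⟩)
      have h_edge_lt : (G.deleteEdges {s(u,v)}).edgeFinset.card < G.edgeFinset.card :=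
        Finset.card_lt_card (SimpleGraph.edgeFinset_ssubset_edgeFinset.mpr h_lt)
      have hmin := h_minimal V (G.deleteEdges {s(u,v)}) h_ni' hno_iso (by convert h_edge_lt)
      exact h_counterexample (le_trans (Nat.mul_le_mul_left 4 hKedge) hmin)
    · -- Subcase B: v is a second leaf at u; remove the vertex v
      push_neg at hv'
      have hv_leaf : ∀ y, G.Adj v y → y = u := fun y hy => hv' y hy
      set H := SimpleGraph.comap (Subtype.val : {x : V // x ≠ v} → V) G with hH
      have hadjH : ∀ a b : {x : V // x ≠ v}, H.Adj a b ↔ G.Adj a b := by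
        intro a b; rw [hH, SimpleGraph.comap_adj]
      have hsurj : ∀ x : V, x ≠ v → ∃ a : {x : V // x ≠ v}, (a : V) = x :=
        fun x hx => ⟨⟨x, hx⟩, rfl⟩
      have hK2 : GameTD.gammaTG G ≤ GameTD.gammaTG H := by
        refine GameTD.K_vertex G u v w H (Subtype.val) hadjH hsurj hv_leaf hw h_uw h_uv
          h_vw h_no_isolated_vertex ⟨w, hwv⟩ rfl _ true ∅ ∅ le_rfl ?_ ?_ ?_
        · intro x hx; exact absurd hx (by
            intro hc
            obtain ⟨s, hs, -⟩ := (GameTD.mem_Dom H).mp hc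
            exact absurd hs (Finset.notMem_empty s))
        · intro x hx; exact absurd hx (hempty _ _)
        · intro hx
          obtain ⟨s, hs, -⟩ := (GameTD.mem_Dom H).mp hx
          exact absurd hs (Finset.notMem_empty s)
      have h_niH : ∀ x : {x : V // x ≠ v}, ∃ y, H.Adj x y := by
        intro x
        obtain ⟨y, hy⟩ := h_no_isolated_vertex (x : V)
        by_cases hyv : y = v
        · have hxu : (x : V) = u := hv_leaf _ (hyv ▸ hy.symm)
          refine ⟨⟨w, hwv⟩, (hadjH _ _).mpr ?_⟩
          rw [hxu]; exact h_uw
        · exact ⟨⟨y, hyv⟩, (hadjH _ _).mpr hy⟩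
      have h_no_isoH : ¬ ∃ a b : {x : V // x ≠ v}, H.Adj a b ∧
          (∀ y, H.Adj a y → y = b) ∧ (∀ y, H.Adj b y → y = a) := by
        rintro ⟨a, b, hab, hA, hB⟩
        have hA' : ∀ y : V, G.Adj (a : V) y → y = (b : V) ∨ y = v := by
          intro y hy
          by_cases hyv : y = v
          · exact Or.inr hyv
          · exact Or.inl (congrArg Subtype.val (hA ⟨y, hyv⟩ ((hadjH _ _).mpr hy)))
        have hB' : ∀ y : V, G.Adj (b : V) y → y = (a : V) ∨ y = v := by
          intro y hy
          by_cases hyv : y = v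
          · exact Or.inr hyv
          · exact Or.inl (congrArg Subtype.val (hB ⟨y, hyv⟩ ((hadjH _ _).mpr hy)))
        by_cases hau : (a : V) = u
        · have hwb : w = (b : V) := by
            have := hA' w (by rw [hau]; exact h_uw)
            exact this.resolve_right hwv
          have hzb : z = (b : V) := by
            have := hA' z (by rw [hau]; exact huz)
            exact this.resolve_right hzv
          exact hzw (hzb.trans hwb.symm)
        · by_cases hbu : (b : V) = u
          · have hwb : w = (a : V) := by
              have := hB' w (by rw [hbu]; exact h_uw)
              exact this.resolve_right hwv
            have hzb : z = (a : V) := by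
              have := hB' z (by rw [hbu]; exact huz)
              exact this.resolve_right hzv
            exact hzw (hzb.trans hwb.symm)
          · refine h_no_isolated_edge ⟨a, b, (hadjH a b).mp hab, ?_, ?_⟩
            · intro y hy
              rcases hA' y hy with h | h
              · exact h
              · subst h
                exact absurd (hv_leaf _ hy.symm) hau
            · intro y hy
              rcases hB' y hy with h | h
              · exact h
              · subst h
                exact absurd (hv_leaf _ hy.symm) hbu
      have h_edge_ltH : H.edgeFinset.card < G.edgeFinset.card := by
        classical
        have hinj : Function.Injective (Sym2.map (Subtype.val : {x : V // x ≠ v} → V)) :=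
          Sym2.map.injective Subtype.val_injective
        have himsub : H.edgeFinset.image (Sym2.map Subtype.val) ⊆
            G.edgeFinset.erase s(u,v) := by
          intro e he
          rw [Finset.mem_image] at he
          obtain ⟨e', he', rfl⟩ := he
          refine Finset.mem_erase.mpr ⟨?_, ?_⟩
          · intro heq
            have hvmem : v ∈ Sym2.map (Subtype.val) e' := by
              rw [heq]
              exact Sym2.mem_mk_right u v
            rw [Sym2.mem_map] at hvmem
            obtain ⟨c, -, hc⟩ := hvmem
            exact c.2 hc
          · rw [SimpleGraph.mem_edgeFinset] at he' ⊢
            revert he'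
            refine Sym2.ind (fun a b => ?_) e'
            intro hab
            rw [Sym2.map_pair_eq]
            rw [SimpleGraph.mem_edgeSet] at hab ⊢
            exact (hadjH a b).mp hab
        have h1 : H.edgeFinset.card ≤ (G.edgeFinset.erase s(u,v)).card := by
          rw [← Finset.card_image_of_injective H.edgeFinset hinj]
          exact Finset.card_le_card himsub
        have h2 : (G.edgeFinset.erase s(u,v)).card < G.edgeFinset.card :=
          Finset.card_erase_lt_of_mem (SimpleGraph.mem_edgeFinset.mpr h_uv)
        exact lt_of_le_of_lt h1 h2
      have hcardW : Fintype.card {x : V // x ≠ v} ≤ Fintype.card V :=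
        Fintype.card_le_of_injective _ Subtype.val_injective
      have hmin := h_minimal {x : V // x ≠ v} H h_niH h_no_isoH h_edge_ltH
      refine h_counterexample ?_
      calc 4 * GameTD.gammaTG G ≤ 4 * GameTD.gammaTG H := Nat.mul_le_mul_left 4 hK2
        _ ≤ 3 * Fintype.card {x : V // x ≠ v} := hmin
        _ ≤ 3 * Fintype.card V := Nat.mul_le_mul_left 3 hcardW
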